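/- Let N be a natural number and let ε, δ be real numbers in the open interval (0,1). If N < ln(1/δ)/ln(1/(1−ε)) − 1, then the probability that a Beta(N+1, 1)-distributed random variable exceeds 1−ε is strictly less than 1−δ; that is, ∫_{1−ε}^{1} (N+1)·p^N dp < 1 − δ. -/

import Mathlib

theorem beta_posterior_confidence_converse
    (N : ℕ) (ε δ : ℝ) (hε : ε ∈ Set.Ioo (0:ℝ) 1) (hδ : δ ∈ Set.Ioo (0:ℝ) 1)
    (hN : (N : ℝ) < Real.log (1/δ) / Real.log (1/(1-ε)) - 1) :
    ∫ p in (1-ε)..1, ((N : ℝ) + 1) * p ^ N < 1 - δ := by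
  obtain ⟨hε0, hε1⟩ := hε
  obtain ⟨hδ0, hδ1⟩ := hδ
  have h1e : (0:ℝ) < 1 - ε := by linarith
  have hlog : 0 < Real.log (1/(1-ε)) := by
    apply Real.log_pos
    rw [lt_div_iff₀ h1e]; linarith
  have hint : ∫ p in (1-ε)..1, ((N : ℝ) + 1) * p ^ N = 1 - (1-ε)^(N+1) := by
    have : ∫ p in (1-ε)..1, ((N : ℝ) + 1) * p ^ N
        = ((N:ℝ)+1) * ∫ p in (1-ε)..1, p ^ N := by
      rw [intervalIntegral.integral_const_mul]
    rw [this, integral_pow]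
    field_simp
    rw [one_pow]
  rw [hint]
  have hkey : δ < (1-ε)^(N+1) := by
    have h2 : ((N:ℝ)+1) * Real.log (1/(1-ε)) < Real.log (1/δ) := by
      rw [← lt_div_iff₀ hlog] at *; linarith
    rw [Real.log_div one_ne_zero (ne_of_gt h1e), Real.log_div one_ne_zero (ne_of_gt hδ0),
      Real.log_one] at h2
    have h3 : Real.log δ < ((N:ℝ)+1) * Real.log (1-ε) := by nlinarith
    have h4 : Real.log δ < Real.log ((1-ε)^(N+1)) := by
      rw [Real.log_pow]; push_cast; linarith
    calc δ = Real.exp (Real.log δ) := (Real.exp_log hδ0).symm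
      _ < Real.exp (Real.log ((1-ε)^(N+1))) := Real.exp_lt_exp.2 h4
      _ = (1-ε)^(N+1) := Real.exp_log (pow_pos h1e _)
  linarith
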